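/- Let h, r, m, I, Ω ∈ ℝ with h ≠ 0, r ≠ 0 and I + m·r² ≠ 0, let x₀,x₁,x₂,y₀,y₁,y₂ ∈ ℝ, and let W₁, W₂ ∈ M₃(ℝ). Assume: (a) r·m·(x₂ − 2x₁ + x₀)/h² + (I/(2h²))·Tr((W₁ − W₂)E₂) = 0; (b) r·m·(y₂ − 2y₁ + y₀)/h² − (I/(2h²))·Tr((W₁ − W₂)E₁) = 0; (c) (x₁ − x₀)/h + (r/(2h))·Tr(W₁E₂) + Ω·(y₁ + y₀)/2 = 0; (d) (y₁ − y₀)/h − (r/(2h))·Tr(W₁E₁) − Ω·(x₁ + x₀)/2 = 0; (e) (x₂ − x₁)/h + (r/(2h))·Tr(W₂E₂) + Ω·(y₂ + y₁)/2 = 0; (f) (y₂ − y₁)/h − (r/(2h))·Tr(W₂E₁) − Ω·(x₂ + x₁)/2 = 0. Then (x₂ − 2x₁ + x₀)/h² + (I·Ω/(I + m·r²))·(y₂ − y₀)/(2h) = 0 and (y₂ − 2y₁ + y₀)/h² − (I·Ω/(I + m·r²))·(x₂ − x₀)/(2h) = 0. -/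

import Mathlib

/-- For the discretized rolling ball on a rotating table: the discrete nonholonomic
Euler-Lagrange equations (a)–(b) together with the discrete rolling constraints
(c)–(f) at two consecutive steps imply the simplified pair of difference equations for
the contact point. -/
theorem stmt_13 (h r m I Ω : ℝ) (hh : h ≠ 0) (hr : r ≠ 0) (hIm : I + m * r ^ 2 ≠ 0)
    (x₀ x₁ x₂ y₀ y₁ y₂ : ℝ)
    (W₁ W₂ : Matrix (Fin 3) (Fin 3) ℝ)
    (E₁ E₂ : Matrix (Fin 3) (Fin 3) ℝ)
    (hE₁ : E₁ = !![0, 0, 0; 0, 0, -1; 0, 1, 0])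
    (hE₂ : E₂ = !![0, 0, 1; 0, 0, 0; -1, 0, 0])
    (ha : r * m * (x₂ - 2 * x₁ + x₀) / h ^ 2 + (I / (2 * h ^ 2)) * ((W₁ - W₂) * E₂).trace = 0)
    (hb : r * m * (y₂ - 2 * y₁ + y₀) / h ^ 2 - (I / (2 * h ^ 2)) * ((W₁ - W₂) * E₁).trace = 0)
    (hc : (x₁ - x₀) / h + (r / (2 * h)) * (W₁ * E₂).trace + Ω * (y₁ + y₀) / 2 = 0)
    (hd : (y₁ - y₀) / h - (r / (2 * h)) * (W₁ * E₁).trace - Ω * (x₁ + x₀) / 2 = 0)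
    (he : (x₂ - x₁) / h + (r / (2 * h)) * (W₂ * E₂).trace + Ω * (y₂ + y₁) / 2 = 0)
    (hf : (y₂ - y₁) / h - (r / (2 * h)) * (W₂ * E₁).trace - Ω * (x₂ + x₁) / 2 = 0) :
    (x₂ - 2 * x₁ + x₀) / h ^ 2 + (I * Ω / (I + m * r ^ 2)) * (y₂ - y₀) / (2 * h) = 0 ∧
    (y₂ - 2 * y₁ + y₀) / h ^ 2 - (I * Ω / (I + m * r ^ 2)) * (x₂ - x₀) / (2 * h) = 0 := by
  rw [sub_mul, Matrix.trace_sub] at ha hb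
  have h2 : (2 : ℝ) * h ≠ 0 := by positivity
  constructor
  · field_simp at ha hc he ⊢
    have key : (x₂ - 2 * x₁ + x₀) * ((I + m * r ^ 2) * 2) + I * Ω * (y₂ - y₀) * h = 0 := by
      linear_combination r * ha + I * (he - hc)
    have hinv := mul_inv_cancel₀ hIm
    linear_combination (I + m * r ^ 2)⁻¹ * key - 2 * (x₂ - 2 * x₁ + x₀) * hinv
  · field_simp at hb hd hf ⊢
    have key : (y₂ - 2 * y₁ + y₀) * ((I + m * r ^ 2) * 2) - I * Ω * (x₂ - x₀) * h = 0 := by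
      linear_combination r * hb + I * (hf - hd)
    have hinv := mul_inv_cancel₀ hIm
    linear_combination (I + m * r ^ 2)⁻¹ * key - 2 * (y₂ - 2 * y₁ + y₀) * hinv
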